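/- If a₁ and a₂ are piecewise linear functions with b₁ and b₂ breakpoints respectively, then the composition a₂ ∘ a₁ (where a₁ is non-decreasing) is piecewise linear with at most b₁ + b₂ - 1 breakpoints. -/

import Mathlib

/-- `f` is piecewise linear with `b` breakpoints `t 0 < t 1 < ⋯ < t (b-1)`,
affine between consecutive breakpoints. -/
def PiecewiseLinearOn (f : ℝ → ℝ) (t : ℕ → ℝ) (b : ℕ) : Prop :=
  (∀ i, i + 1 ≤ b - 1 → t i < t (i + 1)) ∧
  ∀ i, i + 1 ≤ b - 1 → ∃ m c : ℝ, ∀ x ∈ Set.Icc (t i) (t (i + 1)), f x = m * x + c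

private lemma chain_mono_le (t : ℕ → ℝ) (n : ℕ)
    (h : ∀ i, i + 1 ≤ n → t i < t (i + 1)) :
    ∀ j, j ≤ n → ∀ i, i ≤ j → t i ≤ t j := by
  intro j
  induction j with
  | zero => intro _ i hi; simp [Nat.le_zero.mp hi]
  | succ k ih =>
    intro hk i hi
    rcases Nat.lt_succ_iff_lt_or_eq.mp (Nat.lt_succ_of_le hi) with h' | h'
    · exact le_trans (ih (by omega) i (by omega)) (le_of_lt (h k (by omega)))
    · exact le_of_eq (by rw [h'])

private lemma chain_mono_lt (t : ℕ → ℝ) (n : ℕ)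
    (h : ∀ i, i + 1 ≤ n → t i < t (i + 1)) :
    ∀ i j, i < j → j ≤ n → t i < t j := by
  intro i j hij hjn
  have h1 : t i < t (i + 1) := h i (by omega)
  have h2 : t (i + 1) ≤ t j := chain_mono_le t n h j hjn (i + 1) (by omega)
  linarith

private lemma exists_greatest (Q : ℕ → Prop) (n : ℕ) (h0 : Q 0) :
    ∃ i, i ≤ n ∧ Q i ∧ ∀ k, i < k → k ≤ n → ¬ Q k := by
  induction n with
  | zero => exact ⟨0, le_refl _, h0, fun k hk hk' => by omega⟩
  | succ n ih =>
    obtain ⟨i, hi, hQ, hmax⟩ := ih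
    by_cases hq : Q (n + 1)
    · exact ⟨n + 1, le_refl _, hq, fun k hk hk' => by omega⟩
    · refine ⟨i, by omega, hQ, fun k hk hk' => ?_⟩
      rcases Nat.lt_succ_iff_lt_or_eq.mp (Nat.lt_succ_of_le hk') with h' | h'
      · exact hmax k hk (by omega)
      · rw [h']; exact hq

set_option maxHeartbeats 2000000 in
/-- the composition of piecewise linear functions with `b₁` and `b₂`
breakpoints (where `a₁` is non-decreasing and maps its domain into the domain of
`a₂`) is piecewise linear with at most `b₁ + b₂ - 1` breakpoints. -/
theorem composition_breakpoint_bound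
    (a₁ a₂ : ℝ → ℝ) (b₁ b₂ : ℕ) (t1 t2 : ℕ → ℝ)
    (hb₁ : 2 ≤ b₁) (hb₂ : 2 ≤ b₂)
    (h₁ : PiecewiseLinearOn a₁ t1 b₁) (h₂ : PiecewiseLinearOn a₂ t2 b₂)
    (hmono : MonotoneOn a₁ (Set.Icc (t1 0) (t1 (b₁ - 1))))
    (hmap : ∀ x ∈ Set.Icc (t1 0) (t1 (b₁ - 1)),
      a₁ x ∈ Set.Icc (t2 0) (t2 (b₂ - 1))) :
    ∃ (b : ℕ) (t : ℕ → ℝ), b ≤ b₁ + b₂ - 1 ∧ t 0 = t1 0 ∧ t (b - 1) = t1 (b₁ - 1) ∧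
      PiecewiseLinearOn (fun x => a₂ (a₁ x)) t b := by
  classical
  obtain ⟨ht1, ha1⟩ := h₁
  obtain ⟨ht2, ha2⟩ := h₂
  have m1le : ∀ i j, i ≤ j → j ≤ b₁ - 1 → t1 i ≤ t1 j := fun i j hij hj =>
    chain_mono_le t1 (b₁ - 1) ht1 j hj i hij
  have m1lt : ∀ i j, i < j → j ≤ b₁ - 1 → t1 i < t1 j := fun i j hij hj =>
    chain_mono_lt t1 (b₁ - 1) ht1 i j hij hj
  -- the crossing predicate: x is the rightmost point at level t2 j
  set P : ℕ → ℝ → Prop := fun j x =>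
    x ∈ Set.Ioo (t1 0) (t1 (b₁ - 1)) ∧ a₁ x = t2 j ∧
      ∀ y ∈ Set.Ioc x (t1 (b₁ - 1)), a₁ x < a₁ y with hP
  set g : ℕ → ℝ := fun j => if h : ∃ x, P j x then h.choose else t1 0 with hg
  have hPg : ∀ j x, P j x → P j (g j) := by
    intro j x hx
    have hex : ∃ x, P j x := ⟨x, hx⟩
    rw [hg]; simp only [dif_pos hex]; exact hex.choose_spec
  have hPunique : ∀ j x, P j x → x = g j := by
    intro j x hx
    have hgx : P j (g j) := hPg j x hx
    by_contra hne
    rcases lt_or_gt_of_ne hne with h' | h'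
    · have := hx.2.2 (g j) ⟨h', le_of_lt hgx.1.2⟩
      rw [hx.2.1, hgx.2.1] at this; exact lt_irrefl _ this
    · have := hgx.2.2 x ⟨h', le_of_lt hx.1.2⟩
      rw [hx.2.1, hgx.2.1] at this; exact lt_irrefl _ this
  have hgIcc : ∀ j, g j ∈ Set.Icc (t1 0) (t1 (b₁ - 1)) := by
    intro j
    rw [hg]
    by_cases hex : ∃ x, P j x
    · simp only [dif_pos hex]
      exact ⟨le_of_lt hex.choose_spec.1.1, le_of_lt hex.choose_spec.1.2⟩
    · simp only [dif_neg hex]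
      exact ⟨le_refl _, m1le 0 (b₁ - 1) (by omega) (le_refl _)⟩
  set S : Finset ℝ := (Finset.range b₁).image t1 ∪ (Finset.Icc 1 (b₂ - 2)).image g
    with hS
  have hSsub : ∀ y ∈ S, y ∈ Set.Icc (t1 0) (t1 (b₁ - 1)) := by
    intro y hy
    rw [hS, Finset.mem_union] at hy
    rcases hy with hy | hy
    · obtain ⟨i, hi, rfl⟩ := Finset.mem_image.mp hy
      rw [Finset.mem_range] at hi
      exact ⟨m1le 0 i (by omega) (by omega), m1le i (b₁ - 1) (by omega) (le_refl _)⟩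
    · obtain ⟨j, _, rfl⟩ := Finset.mem_image.mp hy
      exact hgIcc j
  have ht1S : ∀ i, i ≤ b₁ - 1 → t1 i ∈ S := by
    intro i hi
    rw [hS, Finset.mem_union]
    exact Or.inl (Finset.mem_image.mpr ⟨i, Finset.mem_range.mpr (by omega), rfl⟩)
  set l := S.sort (· ≤ ·) with hl
  set b := S.card with hb
  have hlen : l.length = b := Finset.length_sort _
  have hsorted : l.Pairwise (· < ·) := (Finset.sortedLT_sort S).pairwise
  set tt : ℕ → ℝ := fun n => l.getD n 0 with htt
  have htget : ∀ n (hn : n < b), tt n = l.get ⟨n, by omega⟩ := by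
    intro n hn
    rw [htt]
    simp only [List.getD_eq_getElem l 0 (by omega : n < l.length), List.get_eq_getElem]
  have tmem : ∀ n, n < b → tt n ∈ S := by
    intro n hn
    have hm : tt n ∈ l := by
      rw [htget n hn]; exact List.get_mem l ⟨n, by omega⟩
    rwa [hl, Finset.mem_sort] at hm
  have gle : ∀ p q : Fin l.length, p ≤ q → l.get p ≤ l.get q := by
    intro p q hpq
    rcases Fin.eq_or_lt_of_le hpq with h' | h'
    · exact le_of_eq (congrArg l.get h')
    · exact le_of_lt (hsorted.rel_get_of_lt h')
  have tstrict : ∀ p q : ℕ, p < q → q < b → tt p < tt q := by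
    intro p q hpq hq
    rw [htget p (by omega), htget q hq]
    exact hsorted.rel_get_of_lt (by simpa using hpq)
  have tgap : ∀ y ∈ S, ∀ k, k + 1 < b → y ≤ tt k ∨ tt (k + 1) ≤ y := by
    intro y hy k hk
    have hyl : y ∈ l := (Finset.mem_sort _).mpr hy
    obtain ⟨⟨q, hq⟩, rfl⟩ := List.mem_iff_get.mp hyl
    rcases le_or_gt q k with h' | h'
    · left
      rw [htget k (by omega)]
      exact gle _ _ (by simpa using h')
    · right
      rw [htget (k + 1) hk]
      exact gle _ _ (by simpa using h')
  have hbpos : 2 ≤ b := by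
    have h0 : t1 0 ∈ S := ht1S 0 (by omega)
    have h1 : t1 (b₁ - 1) ∈ S := ht1S (b₁ - 1) (le_refl _)
    have hne : t1 0 ≠ t1 (b₁ - 1) := ne_of_lt (m1lt 0 (b₁ - 1) (by omega) (le_refl _))
    have : ({t1 0, t1 (b₁ - 1)} : Finset ℝ) ⊆ S := by
      intro x hx; simp only [Finset.mem_insert, Finset.mem_singleton] at hx
      rcases hx with rfl | rfl <;> assumption
    calc 2 = ({t1 0, t1 (b₁ - 1)} : Finset ℝ).card := by
              rw [Finset.card_insert_of_notMem (by simpa using hne), Finset.card_singleton]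
         _ ≤ S.card := Finset.card_le_card this
  have hcard : b ≤ b₁ + b₂ - 1 := by
    have h1 : ((Finset.range b₁).image t1).card ≤ b₁ := by
      calc ((Finset.range b₁).image t1).card ≤ (Finset.range b₁).card :=
            Finset.card_image_le
        _ = b₁ := Finset.card_range _
    have h2 : ((Finset.Icc 1 (b₂ - 2)).image g).card ≤ b₂ - 2 := by
      calc ((Finset.Icc 1 (b₂ - 2)).image g).card ≤ (Finset.Icc 1 (b₂ - 2)).card :=
            Finset.card_image_le
        _ = b₂ - 2 := by rw [Nat.card_Icc]; omega
    have := Finset.card_union_le ((Finset.range b₁).image t1)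
      ((Finset.Icc 1 (b₂ - 2)).image g)
    rw [hb, hS]
    omega
  have ht0 : tt 0 = t1 0 := by
    have hmem : tt 0 ∈ S := tmem 0 (by omega)
    have hle : t1 0 ≤ tt 0 := (hSsub _ hmem).1
    have hge : tt 0 ≤ t1 0 := by
      have h0 : t1 0 ∈ l := (Finset.mem_sort _).mpr (ht1S 0 (by omega))
      obtain ⟨⟨q, hq⟩, hqe⟩ := List.mem_iff_get.mp h0
      rw [← hqe, htget 0 (by omega)]
      exact gle _ _ (by simp)
    linarith
  have htlast : tt (b - 1) = t1 (b₁ - 1) := by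
    have hmem : tt (b - 1) ∈ S := tmem (b - 1) (by omega)
    have hle : tt (b - 1) ≤ t1 (b₁ - 1) := (hSsub _ hmem).2
    have hge : t1 (b₁ - 1) ≤ tt (b - 1) := by
      have h0 : t1 (b₁ - 1) ∈ l := (Finset.mem_sort _).mpr (ht1S (b₁ - 1) (le_refl _))
      obtain ⟨⟨q, hq⟩, hqe⟩ := List.mem_iff_get.mp h0
      rw [← hqe, htget (b - 1) (by omega)]
      exact gle _ _ (by simp [Fin.le_def]; omega)
    linarith
  refine ⟨b, tt, hcard, ht0, htlast, fun k hk => tstrict k (k + 1) (by omega) (by omega),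
    fun k hk => ?_⟩
  -- the affine property on [tt k, tt (k+1)]
  have hkb : k + 1 < b := by omega
  set s := tt k with hs
  set s' := tt (k + 1) with hs'
  have hss' : s < s' := tstrict k (k + 1) (by omega) hkb
  have hsIcc : s ∈ Set.Icc (t1 0) (t1 (b₁ - 1)) := hSsub _ (tmem k (by omega))
  have hs'Icc : s' ∈ Set.Icc (t1 0) (t1 (b₁ - 1)) := hSsub _ (tmem (k + 1) hkb)
  -- find the piece of a₁ containing [s, s']
  obtain ⟨i, hib, his, himax⟩ := exists_greatest (fun i => t1 i ≤ s) (b₁ - 2) hsIcc.1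
  have hi1 : i + 1 ≤ b₁ - 1 := by omega
  have hs'le : s' ≤ t1 (i + 1) := by
    have hgt : s < t1 (i + 1) := by
      by_contra hcon
      push_neg at hcon
      rcases Nat.lt_or_ge i (b₁ - 2) with h' | h'
      · exact himax (i + 1) (by omega) (by omega) hcon
      · have he : i + 1 = b₁ - 1 := by omega
        rw [he] at hcon
        linarith [hs'Icc.2]
    rcases tgap (t1 (i + 1)) (ht1S (i + 1) hi1) k hkb with h' | h'
    · linarith
    · exact h'
  have hsubIcc : Set.Icc s s' ⊆ Set.Icc (t1 i) (t1 (i + 1)) := by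
    intro x hx; exact ⟨le_trans his hx.1, le_trans hx.2 hs'le⟩
  obtain ⟨m, c, hmc⟩ := ha1 i hi1
  have ht1iIcc : t1 i ∈ Set.Icc (t1 0) (t1 (b₁ - 1)) :=
    ⟨m1le 0 i (by omega) (by omega), m1le i (b₁ - 1) (by omega) (le_refl _)⟩
  have ht1i1Icc : t1 (i + 1) ∈ Set.Icc (t1 0) (t1 (b₁ - 1)) :=
    ⟨m1le 0 (i + 1) (by omega) (by omega), m1le (i + 1) (b₁ - 1) (by omega) (le_refl _)⟩
  have hii1 : t1 i < t1 (i + 1) := ht1 i hi1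
  have hm0 : 0 ≤ m := by
    have h1 : a₁ (t1 i) ≤ a₁ (t1 (i + 1)) := hmono ht1iIcc ht1i1Icc (le_of_lt hii1)
    rw [hmc (t1 i) ⟨le_refl _, le_of_lt hii1⟩,
        hmc (t1 (i + 1)) ⟨le_of_lt hii1, le_refl _⟩] at h1
    nlinarith
  rcases eq_or_lt_of_le hm0 with hmz | hmpos
  · -- a₁ is constant on the piece
    refine ⟨0, a₂ c, fun x hx => ?_⟩
    have h0 : a₁ x = c := by rw [hmc x (hsubIcc hx), ← hmz]; ring
    show a₂ (a₁ x) = 0 * x + a₂ c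
    rw [h0]; ring
  · -- a₁ is strictly increasing on the piece
    have has : a₁ s = m * s + c := hmc s (hsubIcc ⟨le_refl _, le_of_lt hss'⟩)
    have has' : a₁ s' = m * s' + c := hmc s' (hsubIcc ⟨le_of_lt hss', le_refl _⟩)
    obtain ⟨j, hjb, hjs, hjmax⟩ :=
      exists_greatest (fun j => t2 j ≤ a₁ s) (b₂ - 2) (hmap s hsIcc).1
    have hj1 : j + 1 ≤ b₂ - 1 := by omega
    have hup : a₁ s' ≤ t2 (j + 1) := by
      by_contra hcon
      push_neg at hcon
      rcases Nat.lt_or_ge j (b₂ - 2) with h' | h'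
      · -- interior level: build the crossing point, which must be in S
        have hlow : a₁ s < t2 (j + 1) :=
          lt_of_not_ge (hjmax (j + 1) (by omega) (by omega))
        set x := (t2 (j + 1) - c) / m with hx
        have hx1 : s < x := by
          rw [hx, lt_div_iff₀ hmpos]
          linarith
        have hx2 : x < s' := by
          rw [hx, div_lt_iff₀ hmpos]
          linarith
        have hxIcc : x ∈ Set.Icc (t1 i) (t1 (i + 1)) :=
          hsubIcc ⟨le_of_lt hx1, le_of_lt hx2⟩
        have hax : a₁ x = t2 (j + 1) := by
          rw [hmc x hxIcc, hx]
          field_simp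
          ring
        have hPx : P (j + 1) x := by
          refine ⟨⟨lt_of_le_of_lt hsIcc.1 hx1, lt_of_lt_of_le hx2 hs'Icc.2⟩, hax, ?_⟩
          intro y hy
          rcases le_or_gt y (t1 (i + 1)) with h'' | h''
          · have hyIcc : y ∈ Set.Icc (t1 i) (t1 (i + 1)) :=
              ⟨le_trans hxIcc.1 (le_of_lt hy.1), h''⟩
            rw [hmc x hxIcc, hmc y hyIcc]
            nlinarith [hy.1]
          · have h1 : a₁ (t1 (i + 1)) ≤ a₁ y :=
              hmono ht1i1Icc ⟨le_trans ht1iIcc.1 (le_of_lt (lt_trans hii1 h'')),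
                hy.2⟩ (le_of_lt h'')
            have h2 : a₁ (t1 (i + 1)) = m * t1 (i + 1) + c :=
              hmc (t1 (i + 1)) ⟨le_of_lt hii1, le_refl _⟩
            rw [hmc x hxIcc]
            have hxlt : x < t1 (i + 1) := lt_of_lt_of_le hx2 hs'le
            nlinarith
        have hxg : x = g (j + 1) := hPunique (j + 1) x hPx
        have hginS : g (j + 1) ∈ S := by
          rw [hS, Finset.mem_union]
          exact Or.inr (Finset.mem_image.mpr
            ⟨j + 1, Finset.mem_Icc.mpr ⟨by omega, by omega⟩, rfl⟩)
        rw [← hxg] at hginS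
        rcases tgap x hginS k hkb with h'' | h''
        · rw [← hs] at h''; linarith
        · rw [← hs'] at h''; linarith
      · -- topmost level: contradicts the range condition
        have hje : j + 1 = b₂ - 1 := by omega
        rw [hje] at hcon
        linarith [(hmap s' hs'Icc).2]
    obtain ⟨m2, c2, hmc2⟩ := ha2 j hj1
    refine ⟨m2 * m, m2 * c + c2, fun x hx => ?_⟩
    have hax : a₁ x = m * x + c := hmc x (hsubIcc hx)
    have haxIcc : a₁ x ∈ Set.Icc (t2 j) (t2 (j + 1)) := by
      constructor
      · rw [hax]; nlinarith [hx.1]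
      · rw [hax]; nlinarith [hx.2]
    show a₂ (a₁ x) = m2 * m * x + (m2 * c + c2)
    rw [hmc2 (a₁ x) haxIcc, hax]
    ring
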